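/- Let v(x) = |x|^α x₁ on ℝⁿ \ {0} with n ≥ 2. Then div(|∇v|^{p-2}∇v) = |∇v|^{p-4} α |x|^{3α-4} x₁ { [α + n + (p-2)(2α+3)] |x|² + (α+2)[α(α+n) + (p-2)(α²+α-1)] x₁² }, where |∇v|² = |x|^{2(α-1)} { α(α+2) x₁² + |x|² }. -/

import Mathlib

open Real
open scoped RealInnerProductSpace

/-- The `p`-Laplacian `div(|∇f|^(p-2) ∇f)` of `f`, computed classically as the trace of the
derivative of the vector field `y ↦ ‖∇f(y)‖^(p-2) • ∇f(y)`. -/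
noncomputable def pLaplacian {n : ℕ} (p : ℝ) (f : EuclideanSpace ℝ (Fin n) → ℝ)
    (x : EuclideanSpace ℝ (Fin n)) : ℝ :=
  LinearMap.trace ℝ (EuclideanSpace ℝ (Fin n))
    ((fderiv ℝ (fun y => ‖gradient f y‖ ^ (p - 2) • gradient f y) x).toLinearMap)

variable {E : Type*} [NormedAddCommGroup E] [InnerProductSpace ℝ E]

lemma norm_rpow_eq (β : ℝ) (y : E) : ‖y‖ ^ β = (⟪y, y⟫ : ℝ) ^ (β / 2) := by
  have h : ((2:ℕ):ℝ) * (β/2) = β := by push_cast; ring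
  rw [real_inner_self_eq_norm_sq, ← Real.rpow_natCast ‖y‖ 2,
    ← Real.rpow_mul (norm_nonneg y), h]

lemma hasFDerivAt_inner_self (x : E) :
    HasFDerivAt (fun y : E => (⟪y, y⟫ : ℝ)) (2 • (innerSL ℝ x)) x := by
  have h := (hasFDerivAt_id x).norm_sq
  simp only [ContinuousLinearMap.comp_id] at h
  have he : (fun y : E => (⟪y, y⟫ : ℝ)) = fun y => ‖y‖ ^ 2 := by
    ext y; rw [real_inner_self_eq_norm_sq]
  rw [he]; exact h

lemma myHasFDerivAt_norm_rpow (β : ℝ) {x : E} (hx : x ≠ 0) :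
    HasFDerivAt (fun y : E => ‖y‖ ^ β) ((β * ‖x‖ ^ (β - 2)) • (innerSL ℝ x)) x := by
  have hQ : (0:ℝ) < ⟪x, x⟫ := by
    have : ‖x‖ ≠ 0 := norm_ne_zero_iff.2 hx
    rw [real_inner_self_eq_norm_sq]; positivity
  have h1 : HasDerivAt (fun t : ℝ => t ^ (β/2)) ((β/2) * (⟪x,x⟫:ℝ) ^ (β/2 - 1)) (⟪x,x⟫ : ℝ) := by
    simpa using Real.hasDerivAt_rpow_const (p := β/2) (Or.inl hQ.ne')
  have h2 := HasDerivAt.comp_hasFDerivAt (f := fun y : E => (⟪y, y⟫ : ℝ)) x h1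
    (hasFDerivAt_inner_self x)
  have he : (fun y : E => ‖y‖ ^ β) = (fun t : ℝ => t ^ (β/2)) ∘ (fun y : E => (⟪y, y⟫ : ℝ)) := by
    ext y; exact norm_rpow_eq β y
  rw [he]
  convert h2 using 1
  · rfl
  · rfl
  have hP : (⟪x,x⟫:ℝ) ^ (β/2 - 1) = ‖x‖ ^ (β - 2) := by
    have h : ((2:ℕ):ℝ) * (β/2 - 1) = β - 2 := by push_cast; ring
    rw [real_inner_self_eq_norm_sq, ← Real.rpow_natCast ‖x‖ 2,
      ← Real.rpow_mul (norm_nonneg x), h]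
  rw [hP]
  ext u
  simp [hP]
  ring

noncomputable def Wfun (α : ℝ) (e : E) (y : E) : E :=
  (α * ‖y‖ ^ (α-2) * ⟪e, y⟫) • y + ‖y‖ ^ α • e

noncomputable def Df (α : ℝ) (e x : E) : E →L[ℝ] ℝ :=
  (α * (α-2) * ‖x‖ ^ (α-4) * ⟪e, x⟫) • innerSL ℝ x + (α * ‖x‖ ^ (α-2)) • innerSL ℝ e

noncomputable def Dg (α : ℝ) (x : E) : E →L[ℝ] ℝ := (α * ‖x‖ ^ (α-2)) • innerSL ℝ x

noncomputable def DW (α : ℝ) (e x : E) : E →L[ℝ] E :=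
  (Df α e x).smulRight x
  + (α * ‖x‖ ^ (α-2) * ⟪e, x⟫) • ContinuousLinearMap.id ℝ E
  + (Dg α x).smulRight e

lemma hasFDerivAt_f (α : ℝ) (e : E) {x : E} (hx : x ≠ 0) :
    HasFDerivAt (fun y : E => α * ‖y‖ ^ (α-2) * ⟪e, y⟫) (Df α e x) x := by
  have h1 : HasFDerivAt (fun y : E => α * ‖y‖ ^ (α-2))
      (α • (((α-2) * ‖x‖ ^ (α-2-2)) • (innerSL ℝ x))) x :=
    (myHasFDerivAt_norm_rpow (α-2) hx).const_mul α
  have h2 : HasFDerivAt (fun y : E => (⟪e, y⟫ : ℝ)) (innerSL ℝ e) x :=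
    (innerSL ℝ e).hasFDerivAt
  have h3 := h1.mul h2
  convert h3 using 1
  · rfl
  · rfl
  · rfl
  ext u
  simp only [Df, ContinuousLinearMap.add_apply, ContinuousLinearMap.smul_apply,
    innerSL_apply_apply, smul_eq_mul, show α - 2 - 2 = α - 4 from by ring]
  ring

lemma hasFDerivAt_g (α : ℝ) {x : E} (hx : x ≠ 0) :
    HasFDerivAt (fun y : E => ‖y‖ ^ α) (Dg α x) x := by
  unfold Dg; exact myHasFDerivAt_norm_rpow α hx

lemma hasFDerivAt_W (α : ℝ) (e : E) {x : E} (hx : x ≠ 0) :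
    HasFDerivAt (Wfun α e) (DW α e x) x := by
  have h1 := (hasFDerivAt_f α e hx).smul (hasFDerivAt_id x)
  have h2 := (hasFDerivAt_g α hx).smul (hasFDerivAt_const e x)
  have h3 := h1.add h2
  convert h3 using 1
  · rfl
  ext u
  simp [DW, Wfun]
  abel

variable [CompleteSpace E]

lemma hasGradientAt_v (α : ℝ) (e : E) {x : E} (hx : x ≠ 0) :
    HasGradientAt (fun y : E => ‖y‖ ^ α * ⟪e, y⟫) (Wfun α e x) x := by
  rw [hasGradientAt_iff_hasFDerivAt]
  have h1 := (hasFDerivAt_g α hx).mul ((innerSL ℝ e).hasFDerivAt (x := x))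
  convert h1 using 1
  · rfl
  · rfl
  ext u
  simp [Wfun, Dg, inner_add_left, inner_smul_left, real_inner_comm x u]
  ring

lemma hasFDerivAt_phi (p α : ℝ) (e : E) {x : E} (hx : x ≠ 0) (hW : Wfun α e x ≠ 0) :
    HasFDerivAt (fun y : E => ‖Wfun α e y‖ ^ (p - 2))
      (((p-2) * ‖Wfun α e x‖ ^ (p-4)) • ((innerSL ℝ (Wfun α e x)).comp (DW α e x))) x := by
  have hW' := hasFDerivAt_W α e hx
  have hQ : (0:ℝ) < ⟪Wfun α e x, Wfun α e x⟫ := by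
    have : ‖Wfun α e x‖ ≠ 0 := norm_ne_zero_iff.2 hW
    rw [real_inner_self_eq_norm_sq]; positivity
  have hG : HasFDerivAt (fun y : E => (⟪Wfun α e y, Wfun α e y⟫ : ℝ))
      ((fderivInnerCLM ℝ (Wfun α e x, Wfun α e x)).comp ((DW α e x).prod (DW α e x))) x :=
    hW'.inner ℝ hW'
  have h1 : HasDerivAt (fun t : ℝ => t ^ ((p-2)/2))
      (((p-2)/2) * (⟪Wfun α e x, Wfun α e x⟫:ℝ) ^ ((p-2)/2 - 1)) (⟪Wfun α e x, Wfun α e x⟫:ℝ) := by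
    simpa using Real.hasDerivAt_rpow_const (p := (p-2)/2) (Or.inl hQ.ne')
  have h2 := HasDerivAt.comp_hasFDerivAt
    (f := fun y : E => (⟪Wfun α e y, Wfun α e y⟫ : ℝ)) x h1 hG
  have he : (fun y : E => ‖Wfun α e y‖ ^ (p - 2))
      = (fun t : ℝ => t ^ ((p-2)/2)) ∘ (fun y : E => (⟪Wfun α e y, Wfun α e y⟫ : ℝ)) := by
    ext y; exact norm_rpow_eq (p-2) (Wfun α e y)
  rw [he]
  convert h2 using 1
  · rfl
  · rfl
  have hP : (⟪Wfun α e x, Wfun α e x⟫:ℝ) ^ ((p-2)/2 - 1) = ‖Wfun α e x‖ ^ (p - 4) := by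
    have h : ((2:ℕ):ℝ) * ((p-2)/2 - 1) = p - 4 := by push_cast; ring
    rw [real_inner_self_eq_norm_sq, ← Real.rpow_natCast ‖Wfun α e x‖ 2,
      ← Real.rpow_mul (norm_nonneg _), h]
  rw [hP]
  ext u
  simp [hP, real_inner_comm (Wfun α e x)]
  ring

lemma hasFDerivAt_field (p α : ℝ) (e : E) {x : E} (hx : x ≠ 0) (hW : Wfun α e x ≠ 0) :
    HasFDerivAt (fun y : E => ‖Wfun α e y‖ ^ (p - 2) • Wfun α e y)
      (‖Wfun α e x‖ ^ (p-2) • DW α e x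
        + (((p-2) * ‖Wfun α e x‖ ^ (p-4)) •
            ((innerSL ℝ (Wfun α e x)).comp (DW α e x))).smulRight (Wfun α e x)) x :=
  (hasFDerivAt_phi p α e hx hW).smul (hasFDerivAt_W α e hx)

lemma trace_smulRight' {E : Type*} [NormedAddCommGroup E] [NormedSpace ℝ E]
    [FiniteDimensional ℝ E] (L : E →L[ℝ] ℝ) (c : E) :
    LinearMap.trace ℝ E (L.smulRight c).toLinearMap = L c := by
  have h1 : (L.smulRight c).toLinearMap
      = (LinearMap.toSpanSingleton ℝ E c) ∘ₗ (L : E →ₗ[ℝ] ℝ) := by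
    ext u; simp [LinearMap.toSpanSingleton_apply]
  rw [h1, LinearMap.trace_comp_comm']
  have h2 : (L : E →ₗ[ℝ] ℝ) ∘ₗ (LinearMap.toSpanSingleton ℝ E c) = (L c) • LinearMap.id := by
    ext r; simp [LinearMap.toSpanSingleton_apply, mul_comm]
  rw [h2, map_smul, LinearMap.trace_id, smul_eq_mul]
  simp

theorem stmt_0 (n : ℕ) (hn : 2 ≤ n) (p α : ℝ)
    (v : EuclideanSpace ℝ (Fin n) → ℝ)
    (hv : v = fun y => ‖y‖ ^ α * y ⟨0, by omega⟩)
    (x : EuclideanSpace ℝ (Fin n)) (hx : x ≠ 0) (hg : gradient v x ≠ 0) :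
    ‖gradient v x‖ ^ 2
        = ‖x‖ ^ (2 * (α - 1)) * (α * (α + 2) * (x ⟨0, by omega⟩) ^ 2 + ‖x‖ ^ 2) ∧
    pLaplacian p v x
      = ‖gradient v x‖ ^ (p - 4) * α * ‖x‖ ^ (3 * α - 4) * x ⟨0, by omega⟩ *
          ((α + n + (p - 2) * (2 * α + 3)) * ‖x‖ ^ 2 +
            (α + 2) * (α * (α + n) + (p - 2) * (α ^ 2 + α - 1)) * (x ⟨0, by omega⟩) ^ 2) := by
  have hn0 : (0:ℕ) < n := by omega
  set i : Fin n := ⟨0, by omega⟩ with hi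
  set e : EuclideanSpace ℝ (Fin n) := EuclideanSpace.single i 1 with hedef
  have he1 : ∀ y : EuclideanSpace ℝ (Fin n), (⟪e, y⟫ : ℝ) = y i := by
    intro y; simp [hedef, EuclideanSpace.inner_single_left]
  have hveq : v = fun y : EuclideanSpace ℝ (Fin n) => ‖y‖ ^ α * ⟪e, y⟫ := by
    rw [hv]; ext y; rw [he1]
  have hvW : ∀ y : EuclideanSpace ℝ (Fin n), y ≠ 0 → gradient v y = Wfun α e y := by
    intro y hy
    rw [hveq]
    exact (hasGradientAt_v α e hy).gradient
  have hWx : Wfun α e x ≠ 0 := by rw [← hvW x hx]; exact hg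
  have hs : (0:ℝ) < ‖x‖ := norm_pos_iff.2 hx
  have hxx : (⟪x, x⟫ : ℝ) = ‖x‖ ^ 2 := real_inner_self_eq_norm_sq x
  have hex : (⟪e, x⟫ : ℝ) = x i := he1 x
  have hxe : (⟪x, e⟫ : ℝ) = x i := by rw [real_inner_comm]; exact hex
  have hee : (⟪e, e⟫ : ℝ) = 1 := by
    rw [hedef]; simp [EuclideanSpace.inner_single_left, EuclideanSpace.single_apply]
  have hpow1 : ∀ (k : ℕ) (b : ℝ), α - 4 + k = b → ‖x‖ ^ b = ‖x‖ ^ (α-4) * ‖x‖ ^ k := by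
    intro k b hb
    rw [← hb, Real.rpow_add hs, Real.rpow_natCast]
  have hpow2 : ∀ (k : ℕ) (b : ℝ), (α - 4) + (α - 4) + k = b →
      ‖x‖ ^ b = ‖x‖ ^ (α-4) * ‖x‖ ^ (α-4) * ‖x‖ ^ k := by
    intro k b hb
    rw [← hb, Real.rpow_add hs, Real.rpow_add hs, Real.rpow_natCast]
  have hpow3 : ∀ (k : ℕ) (b : ℝ), (α - 4) + (α - 4) + (α - 4) + k = b →
      ‖x‖ ^ b = ‖x‖ ^ (α-4) * ‖x‖ ^ (α-4) * ‖x‖ ^ (α-4) * ‖x‖ ^ k := by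
    intro k b hb
    rw [← hb, Real.rpow_add hs, Real.rpow_add hs, Real.rpow_add hs, Real.rpow_natCast]
  have part1 : ‖gradient v x‖ ^ 2
      = ‖x‖ ^ (2 * (α - 1)) * (α * (α + 2) * (x i) ^ 2 + ‖x‖ ^ 2) := by
    rw [hvW x hx, ← real_inner_self_eq_norm_sq]
    simp only [Wfun, inner_add_left, inner_add_right, real_inner_smul_left,
      real_inner_smul_right, hxx, hex, hxe, hee]
    rw [hpow1 2 (α-2) (by push_cast; ring), hpow1 4 α (by push_cast; ring),
      hpow2 6 (2*(α-1)) (by push_cast; ring)]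
    ring
  refine ⟨part1, ?_⟩
  have hWnorm : (0:ℝ) < ‖Wfun α e x‖ := norm_pos_iff.2 hWx
  have hfd : fderiv ℝ (fun y => ‖gradient v y‖ ^ (p - 2) • gradient v y) x
      = ‖Wfun α e x‖ ^ (p-2) • DW α e x
        + (((p-2) * ‖Wfun α e x‖ ^ (p-4)) •
            ((innerSL ℝ (Wfun α e x)).comp (DW α e x))).smulRight (Wfun α e x) := by
    have heq : (fun y : EuclideanSpace ℝ (Fin n) => ‖gradient v y‖ ^ (p - 2) • gradient v y)
        =ᶠ[nhds x] (fun y => ‖Wfun α e y‖ ^ (p - 2) • Wfun α e y) := by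
      filter_upwards [isOpen_compl_singleton.mem_nhds hx] with y hy
      rw [hvW y hy]
    rw [heq.fderiv_eq, (hasFDerivAt_field p α e hx hWx).fderiv]
  have htr : pLaplacian p v x
      = ‖Wfun α e x‖ ^ (p-2) * (LinearMap.trace ℝ (EuclideanSpace ℝ (Fin n)) (DW α e x).toLinearMap)
        + (((p-2) * ‖Wfun α e x‖ ^ (p-4)) •
            ((innerSL ℝ (Wfun α e x)).comp (DW α e x))) (Wfun α e x) := by
    rw [pLaplacian, hfd]
    rw [ContinuousLinearMap.coe_add, map_add, ContinuousLinearMap.coe_smul, map_smul,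
      smul_eq_mul, trace_smulRight']
  have htrDW : LinearMap.trace ℝ (EuclideanSpace ℝ (Fin n)) (DW α e x).toLinearMap
      = Df α e x x + (α * ‖x‖ ^ (α-2) * ⟪e, x⟫) * n + Dg α x e := by
    rw [DW, ContinuousLinearMap.coe_add, map_add, ContinuousLinearMap.coe_add, map_add,
      trace_smulRight', trace_smulRight', ContinuousLinearMap.coe_smul, map_smul,
      ContinuousLinearMap.coe_id, LinearMap.trace_id, smul_eq_mul]
    simp
  have hW2 : ‖Wfun α e x‖ ^ 2 = ‖x‖ ^ (2 * (α - 1)) * (α * (α + 2) * (x i) ^ 2 + ‖x‖ ^ 2) := by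
    rw [← hvW x hx]; exact part1
  have hBp : ‖Wfun α e x‖ ^ (p-2) = ‖Wfun α e x‖ ^ (p-4) * ‖Wfun α e x‖ ^ (2:ℕ) := by
    rw [← Real.rpow_natCast _ 2, ← Real.rpow_add hWnorm]
    congr 1
    push_cast; ring
  rw [htr, htrDW, hvW x hx, hBp, hW2]
  simp only [Df, Dg, DW, Wfun, ContinuousLinearMap.smul_apply, ContinuousLinearMap.comp_apply,
    ContinuousLinearMap.add_apply, ContinuousLinearMap.smulRight_apply,
    ContinuousLinearMap.id_apply, innerSL_apply_apply, smul_eq_mul,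
    inner_add_left, inner_add_right, real_inner_smul_left, real_inner_smul_right,
    smul_add, smul_smul, hxx, hex, hxe, hee]
  rw [hpow1 2 (α-2) (by push_cast; ring), hpow1 4 α (by push_cast; ring),
    hpow1 0 (α-4) (by push_cast; ring), hpow2 6 (2*(α-1)) (by push_cast; ring),
    hpow3 8 (3*α-4) (by push_cast; ring)]
  ring
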